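/- Let (Ω, P) be a probability space and let A_1, …, A_N be measurable events (N ≥ 2) with P(A_i) > 0 for every i. Let δ = max(0, max_{1≤i≤N} (γ_i − (N−1)α_i)). Then P(⋃_{i=1}^N A_i) ≥ Σ_{i=1}^N [1/⌊γ_i/α_i⌋ − (γ_i/α_i − ⌊γ_i/α_i⌋)/((1+⌊γ_i/α_i⌋)⌊γ_i/α_i⌋)]·α_i + ( Σ_{i=1}^N (N − χ(γ_i/α_i))·(N − χ(γ_i/α_i) − 1) / ( χ(γ_i/α_i)·(χ(γ_i/α_i) + 1) ) ) · δ/N. -/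

import Mathlib

open MeasureTheory

open Classical in
/-- `χ(x) = x − 1` if `x` is an integer with `x ≥ 2`, and `χ(x) = ⌊x⌋` otherwise. -/
noncomputable def chi (x : ℝ) : ℝ :=
  if (∃ n : ℤ, x = (n : ℝ)) ∧ 2 ≤ x then x - 1 else (⌊x⌋ : ℝ)

section KatAux
open Set
variable {Ω : Type*} [MeasurableSpace Ω]

/-- The atom of the Boolean algebra generated by the events. -/
def katAtom {N : ℕ} (A : Fin N → Set Ω) (T : Finset (Fin N)) : Set Ω :=
  ⋂ i, (if i ∈ T then A i else (A i)ᶜ)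

lemma katAtom_meas {N : ℕ} {A : Fin N → Set Ω} (hA : ∀ i, MeasurableSet (A i))
    (T : Finset (Fin N)) : MeasurableSet (katAtom A T) :=
  MeasurableSet.iInter fun i => by
    split_ifs
    · exact hA i
    · exact (hA i).compl

lemma mem_katAtom {N : ℕ} {A : Fin N → Set Ω} {T : Finset (Fin N)} {ω : Ω} :
    ω ∈ katAtom A T ↔ ∀ i, ω ∈ A i ↔ i ∈ T := by
  simp only [katAtom, mem_iInter]
  constructor
  · intro h i
    have := h i
    split_ifs at this with hi
    · exact ⟨fun _ => hi, fun _ => this⟩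
    · exact ⟨fun hh => absurd hh this, fun hh => absurd hh hi⟩
  · intro h i
    split_ifs with hi
    · exact (h i).mpr hi
    · exact fun hh => hi ((h i).mp hh)

lemma katAtom_disjoint {N : ℕ} (A : Fin N → Set Ω) :
    Set.PairwiseDisjoint (↑(Finset.univ : Finset (Finset (Fin N)))) (katAtom A) := by
  intro T _ T' _ hTT'
  rw [Function.onFun, Set.disjoint_left]
  intro ω hT hT'
  apply hTT'
  ext i
  rw [← (mem_katAtom.1 hT i), (mem_katAtom.1 hT' i)]

lemma katAtom_iUnion {N : ℕ} (A : Fin N → Set Ω) :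
    ⋃ T : Finset (Fin N), katAtom A T = Set.univ := by
  rw [Set.iUnion_eq_univ_iff]
  intro ω
  classical
  refine ⟨Finset.univ.filter (fun i => ω ∈ A i), mem_katAtom.2 fun i => ?_⟩
  simp

lemma katAtom_decomp {N : ℕ} {A : Fin N → Set Ω} (hA : ∀ i, MeasurableSet (A i))
    (P : Measure Ω) {B : Set Ω} (hB : MeasurableSet B) :
    P B = ∑ T : Finset (Fin N), P (B ∩ katAtom A T) := by
  have : B = ⋃ T ∈ (Finset.univ : Finset (Finset (Fin N))), B ∩ katAtom A T := by
    simp only [Finset.mem_univ, Set.iUnion_true, ← Set.inter_iUnion, katAtom_iUnion,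
      Set.inter_univ]
  rw [this, measure_biUnion_finset (fun T _ T' _ h =>
      (katAtom_disjoint A (Finset.mem_coe.2 (Finset.mem_univ T))
        (Finset.mem_coe.2 (Finset.mem_univ T')) h).mono inter_subset_right inter_subset_right)
      (fun T _ => hB.inter (katAtom_meas hA T))]
  exact (Finset.sum_congr rfl fun T _ => by rw [← this]).symm

lemma katAtom_subset {N : ℕ} {A : Fin N → Set Ω} {T : Finset (Fin N)} {i : Fin N}
    (hi : i ∈ T) : katAtom A T ⊆ A i :=
  fun _ hω => (mem_katAtom.1 hω i).2 hi

lemma katAtom_inter_of_mem {N : ℕ} {A : Fin N → Set Ω} {T : Finset (Fin N)} {i : Fin N}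
    (hi : i ∈ T) : A i ∩ katAtom A T = katAtom A T :=
  Set.inter_eq_self_of_subset_right (katAtom_subset hi)

lemma katAtom_inter_of_not_mem {N : ℕ} {A : Fin N → Set Ω} {T : Finset (Fin N)} {i : Fin N}
    (hi : i ∉ T) : A i ∩ katAtom A T = ∅ := by
  ext ω
  simp only [Set.mem_inter_iff, Set.mem_empty_iff_false, iff_false, not_and]
  exact fun hω hω' => hi ((mem_katAtom.1 hω' i).1 hω)

lemma katAtom_toReal_decomp {N : ℕ} {A : Fin N → Set Ω} (hA : ∀ i, MeasurableSet (A i))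
    (P : Measure Ω) [IsFiniteMeasure P] {B : Set Ω} (hB : MeasurableSet B) :
    (P B).toReal = ∑ T : Finset (Fin N), (P (B ∩ katAtom A T)).toReal := by
  rw [katAtom_decomp hA P hB, ENNReal.toReal_sum (fun T _ => measure_ne_top P _)]

/-- `α i` as a sum over atoms. -/
lemma kat_alpha {N : ℕ} {A : Fin N → Set Ω} (hA : ∀ i, MeasurableSet (A i))
    (P : Measure Ω) [IsFiniteMeasure P] (i : Fin N) :
    (P (A i)).toReal =
      ∑ T : Finset (Fin N), (if i ∈ T then (P (katAtom A T)).toReal else 0) := by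
  rw [katAtom_toReal_decomp hA P (hA i)]
  refine Finset.sum_congr rfl fun T _ => ?_
  by_cases hi : i ∈ T
  · rw [katAtom_inter_of_mem hi, if_pos hi]
  · rw [katAtom_inter_of_not_mem hi, if_neg hi]
    simp

lemma kat_pair {N : ℕ} {A : Fin N → Set Ω} (hA : ∀ i, MeasurableSet (A i))
    (P : Measure Ω) [IsFiniteMeasure P] (i j : Fin N) :
    (P (A i ∩ A j)).toReal =
      ∑ T : Finset (Fin N), (if i ∈ T ∧ j ∈ T then (P (katAtom A T)).toReal else 0) := by
  rw [katAtom_toReal_decomp hA P ((hA i).inter (hA j))]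
  refine Finset.sum_congr rfl fun T _ => ?_
  by_cases hi : i ∈ T
  · by_cases hj : j ∈ T
    · rw [Set.inter_assoc, katAtom_inter_of_mem hj, katAtom_inter_of_mem hi, if_pos ⟨hi, hj⟩]
    · rw [Set.inter_assoc, katAtom_inter_of_not_mem hj, Set.inter_empty,
        if_neg (fun h => hj h.2)]
      simp
  · rw [Set.inter_comm (A i), Set.inter_assoc, katAtom_inter_of_not_mem hi, Set.inter_empty,
      if_neg (fun h => hi h.1)]
    simp

lemma kat_union {N : ℕ} {A : Fin N → Set Ω} (hA : ∀ i, MeasurableSet (A i))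
    (P : Measure Ω) [IsFiniteMeasure P] :
    (P (⋃ i, A i)).toReal =
      ∑ T : Finset (Fin N), (if T.Nonempty then (P (katAtom A T)).toReal else 0) := by
  rw [katAtom_toReal_decomp hA P (MeasurableSet.iUnion hA)]
  refine Finset.sum_congr rfl fun T _ => ?_
  by_cases hT : T.Nonempty
  · obtain ⟨j, hj⟩ := hT
    rw [if_pos ⟨j, hj⟩]
    congr 2
    exact Set.inter_eq_self_of_subset_right ((katAtom_subset hj).trans (Set.subset_iUnion A j))
  · rw [if_neg hT]
    have : (⋃ i, A i) ∩ katAtom A T = ∅ := by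
      rw [Set.iUnion_inter]
      refine Set.iUnion_eq_empty.2 fun i => katAtom_inter_of_not_mem fun hi => hT ⟨i, hi⟩
    rw [this]
    simp

lemma chi_cases (x : ℝ) : (chi x = x - 1 ∧ (∃ n : ℤ, x = (n : ℝ)) ∧ 2 ≤ x) ∨
    (chi x = (⌊x⌋ : ℝ) ∧ ¬((∃ n : ℤ, x = (n : ℝ)) ∧ 2 ≤ x)) := by
  unfold chi
  split_ifs with h
  · exact Or.inl ⟨rfl, h⟩
  · exact Or.inr ⟨rfl, h⟩

lemma chi_props {x : ℝ} {N : ℕ} (hN : 2 ≤ N) (hx1 : 1 ≤ x) (hxN : x ≤ (N : ℝ)) :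
    (∃ m : ℤ, chi x = (m : ℝ)) ∧ 1 ≤ chi x ∧ chi x ≤ (N : ℝ) - 1 := by
  rcases chi_cases x with ⟨he, ⟨n, hn⟩, h2⟩ | ⟨he, hno⟩
  · exact ⟨⟨n - 1, by rw [he, hn]; push_cast; ring⟩, by rw [he]; linarith,
      by rw [he]; linarith⟩
  · have h1 : (1 : ℤ) ≤ ⌊x⌋ := by
      rw [Int.le_floor]; exact_mod_cast hx1
    have hfl : (⌊x⌋ : ℝ) ≤ x := Int.floor_le x
    have hub : ⌊x⌋ ≤ (N : ℤ) - 1 := by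
      by_contra hcon
      push_neg at hcon
      have hNle : ((N : ℤ) : ℝ) ≤ (⌊x⌋ : ℝ) := by exact_mod_cast (by omega : (N : ℤ) ≤ ⌊x⌋)
      have hxeq : x = (N : ℝ) := le_antisymm hxN (by push_cast at hNle; linarith)
      exact hno ⟨⟨(N : ℤ), by exact_mod_cast hxeq⟩, by rw [hxeq]; exact_mod_cast hN⟩
    refine ⟨⟨⌊x⌋, he⟩, by rw [he]; exact_mod_cast h1, ?_⟩
    rw [he]
    have : (⌊x⌋ : ℝ) ≤ ((N : ℤ) : ℝ) - 1 := by exact_mod_cast (by push_cast; exact_mod_cast hub : (⌊x⌋ : ℝ) ≤ (((N : ℤ) - 1 : ℤ) : ℝ))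
    push_cast at this
    linarith

lemma int_prod_nonneg (k : ℤ) : 0 ≤ (k : ℝ) * ((k : ℝ) - 1) := by
  have h : (0 : ℤ) ≤ k * (k - 1) := by
    rcases le_or_gt 1 k with h | h
    · nlinarith
    · nlinarith
  calc (0 : ℝ) = ((0 : ℤ) : ℝ) := by norm_num
  _ ≤ ((k * (k - 1) : ℤ) : ℝ) := by exact_mod_cast h
  _ = (k : ℝ) * ((k : ℝ) - 1) := by push_cast; ring

/-- The KAT coefficient written in terms of `chi` agrees with the floor version. -/
lemma kat_coef_eq {a g : ℝ} {N : ℕ} (hN : 2 ≤ N) (ha : 0 < a) (h1 : a ≤ g)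
    (hNb : g ≤ (N : ℝ) * a) :
    (1 / chi (g / a) + 1 / (chi (g / a) + 1)) * a - g / (chi (g / a) * (chi (g / a) + 1)) =
    (1 / (⌊g / a⌋ : ℝ) - (g / a - (⌊g / a⌋ : ℝ)) / ((1 + (⌊g / a⌋ : ℝ)) * (⌊g / a⌋ : ℝ))) * a := by
  have hx1 : 1 ≤ g / a := (one_le_div ha).2 h1
  have hane : a ≠ 0 := ne_of_gt ha
  have hgx : g = (g / a) * a := by field_simp
  rcases chi_cases (g / a) with ⟨he, ⟨n, hn⟩, h2⟩ | ⟨he, _⟩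
  · -- integer case: x ≥ 2, chi = x − 1, ⌊x⌋ = x
    have hfl : (⌊g / a⌋ : ℝ) = g / a := by rw [hn, Int.floor_intCast]
    rw [he, hfl]
    set x := g / a
    have hx0 : x ≠ 0 := by positivity
    have hx1' : x - 1 ≠ 0 := by intro h; rw [sub_eq_zero] at h; linarith
    rw [hgx]
    show (1 / (x - 1) + 1 / (x - 1 + 1)) * a - x * a / ((x - 1) * (x - 1 + 1)) = _
    have hx2 : x - 1 + 1 ≠ 0 := by intro h; linarith
    have hx3 : 1 + x ≠ 0 := by intro h; linarith
    field_simp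
    ring
  · rw [he]
    set f := (⌊g / a⌋ : ℝ) with hf
    have hf1 : 1 ≤ f := by
      rw [hf]
      have : (1 : ℤ) ≤ ⌊g / a⌋ := by rw [Int.le_floor]; exact_mod_cast hx1
      exact_mod_cast this
    have hf0 : f ≠ 0 := by linarith
    have hf1' : f + 1 ≠ 0 := by linarith
    have hf1'' : 1 + f ≠ 0 := by linarith
    rw [hgx]
    field_simp
    ring

end KatAux

/-- The KAT bound improved by the gap term: an analytical lower bound on the union probability. -/
theorem kat_plus_gap_bound {Ω : Type*} [MeasurableSpace Ω] (P : Measure Ω)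
    [IsProbabilityMeasure P] (N : ℕ) (hN : 2 ≤ N)
    (A : Fin N → Set Ω) (hA : ∀ i, MeasurableSet (A i))
    (hpos : ∀ i, 0 < P (A i))
    (α γ : Fin N → ℝ)
    (hα : ∀ i, α i = (P (A i)).toReal)
    (hγ : ∀ i, γ i = ∑ j : Fin N, (P (A i ∩ A j)).toReal)
    (δ : ℝ)
    (hδ : δ = max 0 (Finset.univ.sup' (Finset.univ_nonempty_iff.mpr ⟨⟨0, by omega⟩⟩)
        (fun i => γ i - ((N : ℝ) - 1) * α i))) :
    (P (⋃ i, A i)).toReal ≥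
      (∑ i : Fin N, (1 / (⌊γ i / α i⌋ : ℝ) -
        (γ i / α i - (⌊γ i / α i⌋ : ℝ)) /
          ((1 + (⌊γ i / α i⌋ : ℝ)) * (⌊γ i / α i⌋ : ℝ))) * α i) +
      (∑ i : Fin N, ((N : ℝ) - chi (γ i / α i)) * ((N : ℝ) - chi (γ i / α i) - 1) /
        (chi (γ i / α i) * (chi (γ i / α i) + 1))) * (δ / (N : ℝ)) := by
  classical
  have hNR : (0 : ℝ) < (N : ℝ) := by positivity
  set p : Finset (Fin N) → ℝ := fun T => (P (katAtom A T)).toReal with hpdef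
  have hp0 : ∀ T, 0 ≤ p T := fun T => ENNReal.toReal_nonneg
  have hαp : ∀ i, α i = ∑ T : Finset (Fin N), (if i ∈ T then p T else 0) := fun i => by
    rw [hα i, kat_alpha hA P i]
  have hγp : ∀ i, γ i = ∑ T : Finset (Fin N),
      (if i ∈ T then (T.card : ℝ) * p T else 0) := by
    intro i
    rw [hγ i]
    calc ∑ j, (P (A i ∩ A j)).toReal
        = ∑ j, ∑ T : Finset (Fin N), (if i ∈ T ∧ j ∈ T then p T else 0) :=
          Finset.sum_congr rfl fun j _ => kat_pair hA P i j
      _ = ∑ T : Finset (Fin N), ∑ j, (if i ∈ T ∧ j ∈ T then p T else 0) := Finset.sum_comm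
      _ = ∑ T : Finset (Fin N), (if i ∈ T then (T.card : ℝ) * p T else 0) := by
          refine Finset.sum_congr rfl fun T _ => ?_
          by_cases hi : i ∈ T
          · simp only [hi, true_and, if_pos]
            rw [Finset.sum_ite_mem, Finset.univ_inter, Finset.sum_const, nsmul_eq_mul]
          · simp [hi]
  have hsummem : ∀ i : Fin N, ∑ T : Finset (Fin N),
      (if i ∈ T then (if T = Finset.univ then p T else 0) else 0) = p Finset.univ := by
    intro i
    rw [Finset.sum_eq_single Finset.univ]
    · simp
    · intro T _ hT; simp [hT]
    · simp
  -- δ ≤ p univ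
  have hδ0 : 0 ≤ δ := hδ ▸ le_max_left _ _
  have hδp : δ ≤ p Finset.univ := by
    rw [hδ]
    apply max_le (hp0 _)
    apply Finset.sup'_le
    intro i _
    have h1 : γ i - ((N : ℝ) - 1) * α i = ∑ T : Finset (Fin N),
        (if i ∈ T then ((T.card : ℝ) - ((N : ℝ) - 1)) * p T else 0) := by
      rw [hγp, hαp, Finset.mul_sum, ← Finset.sum_sub_distrib]
      refine Finset.sum_congr rfl fun T _ => ?_
      by_cases hi : i ∈ T <;> simp [hi] <;> ring
    rw [h1, ← hsummem i]
    refine Finset.sum_le_sum fun T _ => ?_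
    by_cases hi : i ∈ T
    · rw [if_pos hi, if_pos hi]
      by_cases hu : T = Finset.univ
      · subst hu
        rw [if_pos rfl]
        have hcard : ((Finset.univ : Finset (Fin N)).card : ℝ) = (N : ℝ) := by simp
        rw [hcard]
        have : ((N : ℝ) - ((N : ℝ) - 1)) = 1 := by ring
        rw [this, one_mul]
      · rw [if_neg hu]
        have hlt : T.card < N := by
          have := (Finset.card_lt_iff_ne_univ T).2 hu
          simpa [Fintype.card_fin] using this
        have hcard : (T.card : ℝ) ≤ (N : ℝ) - 1 := by
          have : (T.card : ℝ) ≤ ((N - 1 : ℕ) : ℝ) := by exact_mod_cast (by omega : T.card ≤ N - 1)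
          rw [Nat.cast_sub (by omega : 1 ≤ N)] at this
          simpa using this
        exact mul_nonpos_of_nonpos_of_nonneg (by linarith) (hp0 T)
    · simp [hi]
  -- basic per-i facts
  have hαpos : ∀ i, 0 < α i := fun i => by
    rw [hα i]; exact ENNReal.toReal_pos (hpos i).ne' (measure_ne_top P _)
  have hγge : ∀ i, α i ≤ γ i := by
    intro i
    rw [hαp i, hγp i]
    refine Finset.sum_le_sum fun T _ => ?_
    by_cases hi : i ∈ T
    · simp only [hi, if_pos]
      have h1 : (1 : ℝ) ≤ (T.card : ℝ) := by
        exact_mod_cast Finset.card_pos.2 ⟨i, hi⟩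
      nlinarith [hp0 T]
    · simp [hi]
  have hγle : ∀ i, γ i ≤ (N : ℝ) * α i := by
    intro i
    rw [hαp i, hγp i, Finset.mul_sum]
    refine Finset.sum_le_sum fun T _ => ?_
    by_cases hi : i ∈ T
    · simp only [hi, if_pos]
      have h1 : (T.card : ℝ) ≤ (N : ℝ) := by
        exact_mod_cast (by simpa [Fintype.card_fin] using T.card_le_univ : T.card ≤ N)
      nlinarith [hp0 T]
    · simp [hi]
  have hx1 : ∀ i, 1 ≤ γ i / α i := fun i => (one_le_div (hαpos i)).2 (hγge i)
  have hxN : ∀ i, γ i / α i ≤ (N : ℝ) := fun i =>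
    (div_le_iff₀ (hαpos i)).2 (by linarith [hγle i])
  -- the per-i key inequality
  have key : ∀ i : Fin N,
      (1 / (⌊γ i / α i⌋ : ℝ) - (γ i / α i - (⌊γ i / α i⌋ : ℝ)) /
          ((1 + (⌊γ i / α i⌋ : ℝ)) * (⌊γ i / α i⌋ : ℝ))) * α i +
        ((N : ℝ) - chi (γ i / α i)) * ((N : ℝ) - chi (γ i / α i) - 1) /
          (chi (γ i / α i) * (chi (γ i / α i) + 1)) * (p Finset.univ / (N : ℝ)) ≤
      ∑ T : Finset (Fin N), (if i ∈ T then p T / (T.card : ℝ) else 0) := by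
    intro i
    obtain ⟨⟨m, hm⟩, hc1, hcN⟩ := chi_props hN (hx1 i) (hxN i)
    set c := chi (γ i / α i) with hc
    have hc0 : c ≠ 0 := by linarith
    have hc1' : c + 1 ≠ 0 := by linarith
    set u := 1 / c + 1 / (c + 1) with hu
    set v := 1 / (c * (c + 1)) with hv
    set g := ((N : ℝ) - c) * ((N : ℝ) - c - 1) / ((N : ℝ) * c * (c + 1)) with hg
    have step2 : ∑ T : Finset (Fin N),
        (if i ∈ T then (u - v * (T.card : ℝ) + (if T = Finset.univ then g else 0)) * p T
          else 0) = u * α i - v * γ i + g * p Finset.univ := by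
      have hterm : ∀ T : Finset (Fin N),
          (if i ∈ T then (u - v * (T.card : ℝ) + (if T = Finset.univ then g else 0)) * p T
            else 0) =
          u * (if i ∈ T then p T else 0) - v * (if i ∈ T then (T.card : ℝ) * p T else 0) +
            g * (if i ∈ T then (if T = Finset.univ then p T else 0) else 0) := by
        intro T
        by_cases hi : i ∈ T
        · by_cases hT : T = Finset.univ <;> simp [hi, hT] <;> ring
        · simp [hi]
      rw [Finset.sum_congr rfl fun T _ => hterm T, Finset.sum_add_distrib,
        Finset.sum_sub_distrib, ← Finset.mul_sum, ← Finset.mul_sum, ← Finset.mul_sum,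
        ← hαp, ← hγp, hsummem i]
    have step1 : ∑ T : Finset (Fin N),
        (if i ∈ T then (u - v * (T.card : ℝ) + (if T = Finset.univ then g else 0)) * p T
          else 0) ≤
        ∑ T : Finset (Fin N), (if i ∈ T then p T / (T.card : ℝ) else 0) := by
      refine Finset.sum_le_sum fun T _ => ?_
      by_cases hi : i ∈ T
      · rw [if_pos hi, if_pos hi]
        have hd1 : (1 : ℝ) ≤ (T.card : ℝ) := by
          exact_mod_cast Finset.card_pos.2 ⟨i, hi⟩
        have hd0 : (T.card : ℝ) ≠ 0 := by linarith
        have hcoef : u - v * (T.card : ℝ) + (if T = Finset.univ then g else 0) ≤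
            1 / (T.card : ℝ) := by
          by_cases hT : T = Finset.univ
          · rw [if_pos hT, hT]
            have hcard : ((Finset.univ : Finset (Fin N)).card : ℝ) = (N : ℝ) := by simp
            rw [hcard]
            have hN0 : (N : ℝ) ≠ 0 := ne_of_gt hNR
            have heq : u - v * (N : ℝ) + g = 1 / (N : ℝ) := by
              rw [hu, hv, hg]
              field_simp
              ring
            exact le_of_eq heq
          · rw [if_neg hT, add_zero]
            have hnum : 0 ≤ ((T.card : ℝ) - c) * ((T.card : ℝ) - c - 1) := by
              have : ((T.card : ℝ) - c) = (((T.card : ℤ) - m : ℤ) : ℝ) := by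
                rw [hm]; push_cast; ring
              rw [this]
              have := int_prod_nonneg ((T.card : ℤ) - m)
              linarith [this]
            have hid : 1 / (T.card : ℝ) - (u - v * (T.card : ℝ)) =
                ((T.card : ℝ) - c) * ((T.card : ℝ) - c - 1) /
                  ((T.card : ℝ) * c * (c + 1)) := by
              rw [hu, hv]
              field_simp
              ring
            have hden : 0 < (T.card : ℝ) * c * (c + 1) := by positivity
            nlinarith [div_nonneg hnum (le_of_lt hden)]
        calc (u - v * (T.card : ℝ) + (if T = Finset.univ then g else 0)) * p T
            ≤ (1 / (T.card : ℝ)) * p T := mul_le_mul_of_nonneg_right hcoef (hp0 T)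
          _ = p T / (T.card : ℝ) := by ring
      · simp [hi]
    have step3 : (1 / (⌊γ i / α i⌋ : ℝ) - (γ i / α i - (⌊γ i / α i⌋ : ℝ)) /
          ((1 + (⌊γ i / α i⌋ : ℝ)) * (⌊γ i / α i⌋ : ℝ))) * α i = u * α i - v * γ i := by
      rw [hu, hv]
      have := kat_coef_eq hN (hαpos i) (hγge i) (hγle i)
      rw [← hc] at this
      rw [← this]
      ring
    have step4 : ((N : ℝ) - c) * ((N : ℝ) - c - 1) / (c * (c + 1)) *
        (p Finset.univ / (N : ℝ)) = g * p Finset.univ := by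
      rw [hg]
      have hN0 : (N : ℝ) ≠ 0 := ne_of_gt hNR
      rw [div_mul_div_comm, div_mul_eq_mul_div]
      congr 1
      ring
    rw [step3, step4, ← step2]
    exact step1
  -- assemble
  rw [ge_iff_le, kat_union hA P]
  have hswap : ∑ T : Finset (Fin N), (if T.Nonempty then p T else 0) =
      ∑ i : Fin N, ∑ T : Finset (Fin N), (if i ∈ T then p T / (T.card : ℝ) else 0) := by
    rw [Finset.sum_comm]
    refine Finset.sum_congr rfl fun T _ => ?_
    by_cases hT : T.Nonempty
    · rw [if_pos hT]
      have hd0 : (T.card : ℝ) ≠ 0 := by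
        exact_mod_cast Finset.card_pos.2 hT |>.ne'
      rw [Finset.sum_congr rfl (fun i _ => rfl)]
      rw [show (∑ i : Fin N, if i ∈ T then p T / (T.card : ℝ) else 0) =
        ∑ i ∈ Finset.univ ∩ T, p T / (T.card : ℝ) from Finset.sum_ite_mem _ _ _]
      rw [Finset.univ_inter, Finset.sum_const, nsmul_eq_mul]
      field_simp
    · rw [if_neg hT]
      rw [Finset.not_nonempty_iff_eq_empty] at hT
      subst hT
      simp
  rw [hswap]
  have hCnn : ∀ i : Fin N, 0 ≤ ((N : ℝ) - chi (γ i / α i)) * ((N : ℝ) - chi (γ i / α i) - 1) /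
      (chi (γ i / α i) * (chi (γ i / α i) + 1)) := by
    intro i
    obtain ⟨_, hc1, hcN⟩ := chi_props hN (hx1 i) (hxN i)
    apply div_nonneg
    · apply mul_nonneg <;> linarith
    · positivity
  calc (∑ i : Fin N, (1 / (⌊γ i / α i⌋ : ℝ) - (γ i / α i - (⌊γ i / α i⌋ : ℝ)) /
          ((1 + (⌊γ i / α i⌋ : ℝ)) * (⌊γ i / α i⌋ : ℝ))) * α i) +
        (∑ i : Fin N, ((N : ℝ) - chi (γ i / α i)) * ((N : ℝ) - chi (γ i / α i) - 1) /
          (chi (γ i / α i) * (chi (γ i / α i) + 1))) * (δ / (N : ℝ))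
      ≤ (∑ i : Fin N, (1 / (⌊γ i / α i⌋ : ℝ) - (γ i / α i - (⌊γ i / α i⌋ : ℝ)) /
          ((1 + (⌊γ i / α i⌋ : ℝ)) * (⌊γ i / α i⌋ : ℝ))) * α i) +
        (∑ i : Fin N, ((N : ℝ) - chi (γ i / α i)) * ((N : ℝ) - chi (γ i / α i) - 1) /
          (chi (γ i / α i) * (chi (γ i / α i) + 1))) * (p Finset.univ / (N : ℝ)) := by
        refine add_le_add_right (mul_le_mul_of_nonneg_left ?_
          (Finset.sum_nonneg fun i _ => hCnn i)) _
        gcongr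
    _ = ∑ i : Fin N, ((1 / (⌊γ i / α i⌋ : ℝ) - (γ i / α i - (⌊γ i / α i⌋ : ℝ)) /
          ((1 + (⌊γ i / α i⌋ : ℝ)) * (⌊γ i / α i⌋ : ℝ))) * α i +
        ((N : ℝ) - chi (γ i / α i)) * ((N : ℝ) - chi (γ i / α i) - 1) /
          (chi (γ i / α i) * (chi (γ i / α i) + 1)) * (p Finset.univ / (N : ℝ))) := by
        rw [Finset.sum_add_distrib, Finset.sum_mul]
    _ ≤ ∑ i : Fin N, ∑ T : Finset (Fin N), (if i ∈ T then p T / (T.card : ℝ) else 0) :=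
        Finset.sum_le_sum fun i _ => key i
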